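/- Let r > 0 and let u, v ∈ ℝ with |u − v| ≤ r. If b is a random variable uniformly distributed on the interval [0, r], then the probability that ⌊(u + b)/r⌋ = ⌊(v + b)/r⌋ equals 1 − |u − v| / r. -/
import Mathlib


open MeasureTheory ProbabilityTheory

private lemma floor_collision_key (r d v : ℝ) (hr : 0 < r) (hd0 : 0 ≤ d) (hdr : d ≤ r)
    (hv0 : 0 ≤ v) (hvr : v < r) :
    volume ({b : ℝ | ⌊(v + d + b) / r⌋ = ⌊(v + b) / r⌋} ∩ Set.Ico 0 r)
      = ENNReal.ofReal (r - d) := by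
  have hset : {b : ℝ | ⌊(v + d + b) / r⌋ = ⌊(v + b) / r⌋} ∩ Set.Ico 0 r
      = Set.Ico (0 : ℝ) (r - d - v) ∪ Set.Ico (r - v) (min r (2 * r - d - v)) := by
    ext b
    simp only [Set.mem_inter_iff, Set.mem_setOf_eq, Set.mem_Ico, Set.mem_union, lt_min_iff]
    constructor
    · rintro ⟨hfl, hb0, hbr⟩
      rcases lt_or_ge (v + b) r with hc | hc
      · -- ⌊(v+b)/r⌋ = 0
        have h1 : ⌊(v + b) / r⌋ = 0 := by
          rw [Int.floor_eq_iff]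
          constructor
          · push_cast; positivity
          · push_cast
            rw [zero_add, div_lt_one hr]; linarith
        rw [h1, Int.floor_eq_iff] at hfl
        push_cast at hfl
        rw [zero_add, div_lt_one hr] at hfl
        left; constructor
        · exact hb0
        · linarith [hfl.2]
      · -- ⌊(v+b)/r⌋ = 1
        have h1 : ⌊(v + b) / r⌋ = 1 := by
          rw [Int.floor_eq_iff]
          push_cast
          constructor
          · rw [le_div_iff₀ hr]; linarith
          · rw [div_lt_iff₀ hr]; linarith
        rw [h1, Int.floor_eq_iff] at hfl
        push_cast at hfl
        rw [div_lt_iff₀ hr] at hfl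
        right
        refine ⟨by linarith, by linarith, by linarith [hfl.2]⟩
    · rintro (⟨hb0, hb1⟩ | ⟨hb1, hb2, hb3⟩)
      · have hbr : b < r := by linarith
        refine ⟨?_, hb0, hbr⟩
        have h1 : ⌊(v + b) / r⌋ = 0 := by
          rw [Int.floor_eq_iff]
          constructor
          · push_cast; positivity
          · push_cast; rw [zero_add, div_lt_one hr]; linarith
        have h2 : ⌊(v + d + b) / r⌋ = 0 := by
          rw [Int.floor_eq_iff]
          constructor
          · push_cast; positivity
          · push_cast; rw [zero_add, div_lt_one hr]; linarith
        rw [h1, h2]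
      · refine ⟨?_, by linarith, hb2⟩
        have h1 : ⌊(v + b) / r⌋ = 1 := by
          rw [Int.floor_eq_iff]
          push_cast
          constructor
          · rw [le_div_iff₀ hr]; linarith
          · rw [div_lt_iff₀ hr]; linarith
        have h2 : ⌊(v + d + b) / r⌋ = 1 := by
          rw [Int.floor_eq_iff]
          push_cast
          constructor
          · rw [le_div_iff₀ hr]; linarith
          · rw [div_lt_iff₀ hr]; linarith
        rw [h1, h2]
  rw [hset, measure_union ?_ measurableSet_Ico, Real.volume_Ico, Real.volume_Ico]
  · rcases le_or_gt (r - d) v with h | h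
    · rw [min_eq_right (by linarith)]
      rw [ENNReal.ofReal_of_nonpos (by linarith), zero_add]
      ring_nf
    · rw [min_eq_left (by linarith)]
      rw [← ENNReal.ofReal_add (by linarith) (by linarith)]
      ring_nf
  · rw [Set.disjoint_left]
    rintro b ⟨hb0, hb1⟩ ⟨hb2, hb3⟩
    linarith

private lemma uniform_offset_floor_collision_aux (r u v : ℝ) (hr : 0 < r) (hvu : v ≤ u)
    (huv : u - v ≤ r) :
    ProbabilityTheory.cond volume (Set.Icc (0 : ℝ) r)
        {b : ℝ | ⌊(u + b) / r⌋ = ⌊(v + b) / r⌋}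
      = ENNReal.ofReal (1 - (u - v) / r) := by
  set k : ℤ := ⌊v / r⌋ with hk
  set v' : ℝ := v - k * r with hv'
  set d : ℝ := u - v with hd
  have hv'0 : 0 ≤ v' := by
    have := Int.floor_le (v / r)
    rw [hv']
    have : (k : ℝ) * r ≤ v := by
      rw [hk]
      calc (⌊v / r⌋ : ℝ) * r ≤ (v / r) * r := by
            exact mul_le_mul_of_nonneg_right (Int.floor_le _) hr.le
        _ = v := by field_simp
    linarith
  have hv'r : v' < r := by
    have : v < ((k : ℝ) + 1) * r := by
      rw [hk]
      calc v = (v / r) * r := by field_simp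
        _ < ((⌊v / r⌋ : ℝ) + 1) * r := by
            exact mul_lt_mul_of_pos_right (Int.lt_floor_add_one _) hr
    rw [hv']; nlinarith
  have hseteq : {b : ℝ | ⌊(u + b) / r⌋ = ⌊(v + b) / r⌋}
      = {b : ℝ | ⌊(v' + d + b) / r⌋ = ⌊(v' + b) / r⌋} := by
    ext b
    simp only [Set.mem_setOf_eq]
    have e1 : (u + b) / r = (v' + d + b) / r + k := by
      field_simp [hv', hd]; ring
    have e2 : (v + b) / r = (v' + b) / r + k := by
      field_simp [hv']; ring
    rw [e1, e2, Int.floor_add_intCast, Int.floor_add_intCast]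
    constructor <;> intro h <;> omega
  set S : Set ℝ := {b : ℝ | ⌊(v' + d + b) / r⌋ = ⌊(v' + b) / r⌋} with hS
  rw [hseteq, ProbabilityTheory.cond_apply measurableSet_Icc]
  have hae : (Set.Icc (0 : ℝ) r ∩ S : Set ℝ) =ᵐ[volume] (S ∩ Set.Ico (0 : ℝ) r : Set ℝ) := by
    rw [Set.inter_comm]
    exact Filter.EventuallyEq.inter (Filter.EventuallyEq.refl _ _) Ico_ae_eq_Icc.symm
  rw [measure_congr hae, hS,
    floor_collision_key r d v' hr (by rw [hd]; linarith) (by rw [hd]; linarith)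
    hv'0 hv'r, Real.volume_Icc]
  rw [sub_zero]
  rw [← ENNReal.div_eq_inv_mul, ← ENNReal.ofReal_div_of_pos hr]
  congr 1
  field_simp

/-- Collision probability of the uniform offset in p-stable LSH: if `b` is
uniformly distributed on `[0, r]` (Lebesgue measure conditioned on `[0, r]`)
and `|u − v| ≤ r`, then the probability that `⌊(u + b)/r⌋ = ⌊(v + b)/r⌋`
equals `1 − |u − v| / r`. -/
theorem uniform_offset_floor_collision (r u v : ℝ) (hr : 0 < r) (huv : |u - v| ≤ r) :
    ProbabilityTheory.cond volume (Set.Icc (0 : ℝ) r)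
        {b : ℝ | ⌊(u + b) / r⌋ = ⌊(v + b) / r⌋}
      = ENNReal.ofReal (1 - |u - v| / r) := by
  rcases le_total v u with h | h
  · rw [abs_of_nonneg (by linarith)] at huv ⊢
    exact uniform_offset_floor_collision_aux r u v hr h huv
  · rw [abs_of_nonpos (by linarith)] at huv ⊢
    have hseteq : {b : ℝ | ⌊(u + b) / r⌋ = ⌊(v + b) / r⌋}
        = {b : ℝ | ⌊(v + b) / r⌋ = ⌊(u + b) / r⌋} := by
      ext b; simp only [Set.mem_setOf_eq]; exact eq_comm
    rw [hseteq]
    have := uniform_offset_floor_collision_aux r v u hr h (by linarith)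
    rw [this]
    congr 1
    ring_nf
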